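/- Let (C, E, s) be a skeletally small extriangulated category and let (T, ε, η) and (R, γ, μ) be bivariant δ-functors on C such that T⁰ = R⁰ = Hom_C(?, -), the bimodules T^i and R^i are weakly effaceable for all i > 0, the degree-zero connecting maps are given by pushout/pullback of extensions (f ↦ f_*δ and g ↦ g^*δ), and the two connecting maps commute in the sense that η^{i-1}∘ε^{i-2} = ε^{i-1}∘η^{i-2} on T (and likewise for R). Then there is a unique isomorphism of δ-functors θ^i: R^i → T^i for all i ≥ 0 with θ⁰ the identity of Hom_C(?, -). -/

import Mathlib

open CategoryTheory CategoryTheory.Limits Opposite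

universe v u

/-- An extriangulated category in the sense of Nakaoka–Palu: an additive category `C`
together with a biadditive functor `E : Cᵒᵖ ⥤ C ⥤ Ab` and a realization of extensions
satisfying the Nakaoka–Palu axioms. `real δ x y` means that the sequence
`A --x--> B --y--> Z` belongs to the equivalence class `s δ`, for `δ ∈ E(Z, A)`. -/
class Extriangulated (C : Type u) [Category.{v} C] [Preadditive C]
    [HasZeroObject C] [HasBinaryBiproducts C] : Type (max u (v + 1)) where
  /-- the biadditive functor of extensions; `(E.obj (op Z)).obj A` is `E(Z, A)` -/
  E : Cᵒᵖ ⥤ C ⥤ AddCommGrpCat.{v}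
  /-- `E` is additive in each variable -/
  additive_obj : ∀ (Z : Cᵒᵖ), (E.obj Z).Additive
  additive_map : ∀ {Z Z' : Cᵒᵖ} (f g : Z ⟶ Z'), E.map (f + g) = E.map f + E.map g
  /-- realization predicate: `real δ x y` means `A --x--> B --y--> Z` realizes `δ` -/
  real : ∀ {A Z : C}, ((E.obj (op Z)).obj A) → ∀ {B : C}, (A ⟶ B) → (B ⟶ Z) → Prop
  /-- every extension is realized -/
  real_exists : ∀ {A Z : C} (δ : (E.obj (op Z)).obj A),
    ∃ (B : C) (x : A ⟶ B) (y : B ⟶ Z), real δ x y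
  /-- the zero extension is realized by the split sequence -/
  real_zero : ∀ (A Z : C),
    real (0 : (E.obj (op Z)).obj A) (biprod.inl : A ⟶ A ⊞ Z) (biprod.snd : A ⊞ Z ⟶ Z)
  /-- realizations are closed under isomorphisms fixing the end terms -/
  real_iso : ∀ {A Z B B' : C} (δ : (E.obj (op Z)).obj A) (x : A ⟶ B) (y : B ⟶ Z)
    (e : B ≅ B'), real δ x y → real δ (x ≫ e.hom) (e.inv ≫ y)
  /-- realized sequences are complexes -/
  real_comp_zero : ∀ {A Z B : C} {δ : (E.obj (op Z)).obj A} {x : A ⟶ B} {y : B ⟶ Z},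
    real δ x y → x ≫ y = 0
  /-- realization of morphisms of extensions: if `a_* δ = c^* δ'` then any two chosen
  realizations are connected by a morphism of sequences -/
  real_hom : ∀ {A Z A' Z' B B' : C} (δ : (E.obj (op Z)).obj A) (δ' : (E.obj (op Z')).obj A')
    (x : A ⟶ B) (y : B ⟶ Z) (x' : A' ⟶ B') (y' : B' ⟶ Z') (a : A ⟶ A') (c : Z ⟶ Z'),
    real δ x y → real δ' x' y' →
    (E.obj (op Z)).map a δ = (E.map c.op).app A' δ' →
    ∃ b : B ⟶ B', x ≫ b = a ≫ x' ∧ y ≫ c = b ≫ y'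
  /-- the axiom (ET4) -/
  et4 : ∀ {A B D F C₀ : C} (δ : (E.obj (op D)).obj A) (δ' : (E.obj (op F)).obj B)
    (f : A ⟶ B) (f' : B ⟶ D) (g : B ⟶ C₀) (g' : C₀ ⟶ F),
    real δ f f' → real δ' g g' →
    ∃ (E₀ : C) (h' : C₀ ⟶ E₀) (d : D ⟶ E₀) (e : E₀ ⟶ F)
      (δ'' : (E.obj (op E₀)).obj A),
      real δ'' (f ≫ g) h' ∧
      real ((E.obj (op F)).map f' δ') d e ∧
      g ≫ h' = f' ≫ d ∧ h' ≫ e = g' ∧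
      (E.map d.op).app A δ'' = δ ∧
      (E.obj (op E₀)).map f δ'' = (E.map e.op).app B δ'
  /-- the axiom (ET4)ᵒᵖ -/
  et4op : ∀ {A B D F C₀ : C} (δ : (E.obj (op A)).obj D) (δ' : (E.obj (op B)).obj F)
    (u : D ⟶ B) (v : B ⟶ A) (w : F ⟶ C₀) (t : C₀ ⟶ B),
    real δ u v → real δ' w t →
    ∃ (E₀ : C) (h : E₀ ⟶ C₀) (dc : E₀ ⟶ D) (ec : F ⟶ E₀)
      (δ'' : (E.obj (op A)).obj E₀),
      real δ'' h (t ≫ v) ∧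
      real ((E.map u.op).app F δ') ec dc ∧
      h ≫ t = dc ≫ u ∧ ec ≫ h = w ∧
      (E.obj (op A)).map dc δ'' = δ ∧
      (E.map v.op).app E₀ δ'' = (E.obj (op B)).map ec δ'

namespace Extriangulated

variable {C : Type u} [Category.{v} C] [Preadditive C]
  [HasZeroObject C] [HasBinaryBiproducts C] [Extriangulated C]

/-- The abelian group of `E`-extensions `E(Z, A)`. -/
abbrev Ext (Z A : C) : Type v := ((E (C := C)).obj (op Z)).obj A

/-- Pushforward `f_* δ` of an extension along `f : A ⟶ A'`. -/
abbrev push {Z A A' : C} (f : A ⟶ A') (δ : Ext Z A) : Ext Z A' :=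
  ((E (C := C)).obj (op Z)).map f δ

/-- Pullback `g^* δ` of an extension along `g : Z' ⟶ Z`. -/
abbrev pull {Z Z' A : C} (g : Z' ⟶ Z) (δ : Ext Z A) : Ext Z' A :=
  ((E (C := C)).map g.op).app A δ

/-- A deflation is a morphism appearing as the second map of an `s`-triangle. -/
def IsDeflation {B Z : C} (p : B ⟶ Z) : Prop :=
  ∃ (A : C) (x : A ⟶ B) (δ : Ext Z A), real δ x p

/-- An inflation is a morphism appearing as the first map of an `s`-triangle. -/
def IsInflation {A B : C} (x : A ⟶ B) : Prop :=
  ∃ (Z : C) (p : B ⟶ Z) (δ : Ext Z A), real δ x p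

end Extriangulated

namespace Extriangulated

variable (C : Type u) [Category.{v} C] [Preadditive C]
  [HasZeroObject C] [HasBinaryBiproducts C] [Extriangulated C]

/-- A bivariant δ-functor on the extriangulated category `C`: a sequence of
`C`-`C`-bimodules with connecting morphisms in both variables, natural with respect to
morphisms of `E`-extensions, inducing long exact sequences in both variables for every
`s`-triangle. -/
structure BivDeltaFunctor where
  /-- the sequence of bimodules -/
  T : ℕ → Cᵒᵖ ⥤ C ⥤ AddCommGrpCat.{v}
  /-- the connecting morphisms `ε^i_δ : T^i(A,-) ⟶ T^{i+1}(Z,-)` for `δ ∈ E(Z,A)` -/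
  connE : ∀ (i : ℕ) {A Z : C}, Ext Z A → ((T i).obj (op A) ⟶ (T (i + 1)).obj (op Z))
  /-- the connecting morphisms `η^i_δ : T^i(?,Z) ⟶ T^{i+1}(?,A)` for `δ ∈ E(Z,A)` -/
  connH : ∀ (i : ℕ) {A Z : C}, Ext Z A → ((T i).flip.obj Z ⟶ (T (i + 1)).flip.obj A)
  connE_natural : ∀ (i : ℕ) {A Z A' Z' : C} (δ : Ext Z A) (δ' : Ext Z' A')
    (a : A ⟶ A') (c : Z ⟶ Z'), push a δ = pull c δ' →
    ∀ (U : C) (x : ((T i).obj (op A')).obj U),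
      (connE i δ).app U (((T i).map a.op).app U x)
        = ((T (i + 1)).map c.op).app U ((connE i δ').app U x)
  connH_natural : ∀ (i : ℕ) {A Z A' Z' : C} (δ : Ext Z A) (δ' : Ext Z' A')
    (a : A ⟶ A') (c : Z ⟶ Z'), push a δ = pull c δ' →
    ∀ (U : C) (x : ((T i).obj (op U)).obj Z),
      ((T (i + 1)).obj (op U)).map a ((connH i δ).app (op U) x)
        = (connH i δ').app (op U) (((T i).obj (op U)).map c x)
  exact₁ : ∀ (i : ℕ) {A B Z : C} (δ : Ext Z A) (k : A ⟶ B) (p : B ⟶ Z), real δ k p →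
    ∀ U : C, Function.Exact ⇑(((T i).map p.op).app U) ⇑(((T i).map k.op).app U)
  exact₂ : ∀ (i : ℕ) {A B Z : C} (δ : Ext Z A) (k : A ⟶ B) (p : B ⟶ Z), real δ k p →
    ∀ U : C, Function.Exact ⇑(((T i).map k.op).app U) ⇑((connE i δ).app U)
  exact₃ : ∀ (i : ℕ) {A B Z : C} (δ : Ext Z A) (k : A ⟶ B) (p : B ⟶ Z), real δ k p →
    ∀ U : C, Function.Exact ⇑((connE i δ).app U) ⇑(((T (i + 1)).map p.op).app U)
  exact₄ : ∀ (i : ℕ) {A B Z : C} (δ : Ext Z A) (k : A ⟶ B) (p : B ⟶ Z), real δ k p →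
    ∀ U : C, Function.Exact ⇑(((T i).obj (op U)).map k) ⇑(((T i).obj (op U)).map p)
  exact₅ : ∀ (i : ℕ) {A B Z : C} (δ : Ext Z A) (k : A ⟶ B) (p : B ⟶ Z), real δ k p →
    ∀ U : C, Function.Exact ⇑(((T i).obj (op U)).map p) ⇑((connH i δ).app (op U))
  exact₆ : ∀ (i : ℕ) {A B Z : C} (δ : Ext Z A) (k : A ⟶ B) (p : B ⟶ Z), real δ k p →
    ∀ U : C, Function.Exact ⇑((connH i δ).app (op U)) ⇑(((T (i + 1)).obj (op U)).map k)

variable {C}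

/-- The assumptions (2.2)–(2.4) on a bivariant δ-functor: `T⁰` is the Hom bifunctor,
`T^i` is weakly effaceable in both variables for `i > 0`, the degree-zero connecting
maps are given by pushout/pullback of extensions (under the identification `T¹ = E`),
and the two connecting maps commute. -/
structure BivDeltaFunctor.IsGood (B : BivDeltaFunctor C) : Prop where
  hT0 : B.T 0 = preadditiveCoyoneda
  hT1 : B.T 1 = Extriangulated.E (C := C)
  effaceable_contra : ∀ (i : ℕ), 0 < i → ∀ (U Z : C) (x : ((B.T i).obj (op Z)).obj U),
    ∃ (B₀ : C) (p : B₀ ⟶ Z), IsDeflation p ∧ ((B.T i).map p.op).app U x = 0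
  effaceable_cov : ∀ (i : ℕ), 0 < i → ∀ (U A : C) (x : ((B.T i).obj (op U)).obj A),
    ∃ (B₀ : C) (k : A ⟶ B₀), IsInflation k ∧ ((B.T i).obj (op U)).map k x = 0
  connE_zero : ∀ {A Z : C} (δ : Ext Z A) (U : C) (x : ((B.T 0).obj (op A)).obj U),
    ((eqToHom hT1).app (op Z)).app U ((B.connE 0 δ).app U x)
      = push ((((eqToHom hT0).app (op A)).app U x : (A ⟶ U))) δ
  connH_zero : ∀ {A Z : C} (δ : Ext Z A) (U : C) (x : ((B.T 0).obj (op U)).obj Z),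
    ((eqToHom hT1).app (op U)).app A ((B.connH 0 δ).app (op U) x)
      = pull ((((eqToHom hT0).app (op U)).app Z x : (U ⟶ Z))) δ
  square : ∀ (i : ℕ) {A Z F H : C} (δ : Ext Z A) (ψ : Ext H F)
    (x : ((B.T i).obj (op A)).obj H),
    (B.connH (i + 1) ψ).app (op Z) ((B.connE i δ).app H x)
      = (B.connE (i + 1) δ).app F ((B.connH i ψ).app (op A) x)

/-- Compatibility of a family of bimodule morphisms with both connecting morphisms,
i.e. the condition for being a morphism of bivariant δ-functors. -/
def IsBivDeltaMorphism (R T : BivDeltaFunctor C) (θ : ∀ i, R.T i ⟶ T.T i) : Prop :=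
  (∀ (i : ℕ) {A Z : C} (δ : Ext Z A) (U : C) (x : ((R.T i).obj (op A)).obj U),
    ((θ (i + 1)).app (op Z)).app U ((R.connE i δ).app U x)
      = (T.connE i δ).app U (((θ i).app (op A)).app U x)) ∧
  (∀ (i : ℕ) {A Z : C} (δ : Ext Z A) (U : C) (x : ((R.T i).obj (op U)).obj Z),
    ((θ (i + 1)).app (op U)).app A ((R.connH i δ).app (op U) x)
      = (T.connH i δ).app (op U) (((θ i).app (op U)).app Z x))

end Extriangulated

set_option linter.unusedSectionVars false
set_option maxHeartbeats 1000000

namespace S14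

section
variable {C : Type u} [Category.{v} C] [Preadditive C]

/-- elementwise transport along an equality of bifunctors -/
def tr {F G : Cᵒᵖ ⥤ C ⥤ AddCommGrpCat.{v}} (h : F = G) (Z : Cᵒᵖ) (U : C) :
    (F.obj Z).obj U ⟶ (G.obj Z).obj U := ((eqToHom h).app Z).app U

variable {F G : Cᵒᵖ ⥤ C ⥤ AddCommGrpCat.{v}}

lemma tr_tr_symm (h : F = G) (Z : Cᵒᵖ) (U : C) (x : (G.obj Z).obj U) :
    tr h Z U (tr h.symm Z U x) = x := by subst h; rfl

lemma tr_symm_tr (h : F = G) (Z : Cᵒᵖ) (U : C) (x : (F.obj Z).obj U) :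
    tr h.symm Z U (tr h Z U x) = x := by subst h; rfl

lemma tr_injective (h : F = G) (Z : Cᵒᵖ) (U : C) :
    Function.Injective (tr h Z U) := by subst h; exact fun a b hab => hab

lemma tr_bijective (h : F = G) (Z : Cᵒᵖ) (U : C) :
    Function.Bijective (tr h Z U) := by subst h; exact Function.bijective_id

lemma tr_trans {H : Cᵒᵖ ⥤ C ⥤ AddCommGrpCat.{v}} (h : F = G) (h' : G = H) (Z : Cᵒᵖ) (U : C)
    (x : (F.obj Z).obj U) :
    tr (h.trans h') Z U x = tr h' Z U (tr h Z U x) := by subst h; subst h'; rfl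

lemma tr_natural₁ (h : F = G) {Z Z' : Cᵒᵖ} (c : Z ⟶ Z') (U : C) (x : (F.obj Z).obj U) :
    tr h Z' U ((F.map c).app U x) = (G.map c).app U (tr h Z U x) := by subst h; rfl

lemma tr_natural₂ (h : F = G) (Z : Cᵒᵖ) {U U' : C} (u : U ⟶ U') (x : (F.obj Z).obj U) :
    tr h Z U' ((F.obj Z).map u x) = (G.obj Z).map u (tr h Z U x) := by subst h; rfl

lemma tr₃ {H : Cᵒᵖ ⥤ C ⥤ AddCommGrpCat.{v}} (h1 : F = G) (h2 : H = G) (Z : Cᵒᵖ) (U : C)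
    (x : (F.obj Z).obj U) :
    tr h2 Z U (tr (h1.trans h2.symm) Z U x) = tr h1 Z U x := by
  subst h1; subst h2; rfl

/-- elementwise naturality of a natural transformation of bifunctors, first variable -/
lemma nat_elem₁ (θ : F ⟶ G) {Z Z' : Cᵒᵖ} (c : Z ⟶ Z') (U : C) (x : (F.obj Z).obj U) :
    (θ.app Z').app U ((F.map c).app U x) = (G.map c).app U ((θ.app Z).app U x) :=
  ConcreteCategory.congr_hom (NatTrans.congr_app (θ.naturality c) U) x

/-- elementwise naturality, second variable -/
lemma nat_elem₂ (θ : F ⟶ G) (Z : Cᵒᵖ) {U U' : C} (u : U ⟶ U') (x : (F.obj Z).obj U) :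
    (θ.app Z).app U' ((F.obj Z).map u x) = (G.obj Z).map u ((θ.app Z).app U x) :=
  ConcreteCategory.congr_hom ((θ.app Z).naturality u) x

end

open Extriangulated

section
variable {C : Type u} [Category.{v} C] [Preadditive C]
  [HasZeroObject C] [HasBinaryBiproducts C] [Extriangulated C]

lemma push_id {Z A : C} (δ : Ext Z A) : push (𝟙 A) δ = δ := by
  show ((Extriangulated.E (C := C)).obj (op Z)).map (𝟙 A) δ = δ
  rw [CategoryTheory.Functor.map_id]; rfl

lemma pull_id {Z A : C} (δ : Ext Z A) : pull (𝟙 Z) δ = δ := by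
  show ((Extriangulated.E (C := C)).map (𝟙 Z).op).app A δ = δ
  rw [op_id, CategoryTheory.Functor.map_id]; rfl

lemma pull_comp {Z Z' Z'' A : C} (g : Z'' ⟶ Z') (g' : Z' ⟶ Z) (δ : Ext Z A) :
    pull (g ≫ g') δ = pull g (pull g' δ) := by
  show ((Extriangulated.E (C := C)).map (g ≫ g').op).app A δ = _
  rw [op_comp, CategoryTheory.Functor.map_comp]; rfl

variable {T : BivDeltaFunctor C}

/-- pulling back an extension along its own deflation kills it -/
lemma pull_self_zero (hT : T.IsGood) {A B Z : C} (a₀ : A ⟶ B) (p : B ⟶ Z) (δ : Ext Z A)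
    (hr : real δ a₀ p) : pull p δ = (0 : Ext B A) := by
  set x₁ : ((T.T 0).obj (op A)).obj A := tr hT.hT0.symm (op A) A (𝟙 A) with hx₁
  have h0 : (tr hT.hT0 (op A) A x₁ : (A ⟶ A)) = 𝟙 A := tr_tr_symm hT.hT0 (op A) A (𝟙 A)
  have h1 : tr hT.hT1 (op Z) A ((T.connE 0 δ).app A x₁) = δ := by
    have := hT.connE_zero δ A x₁
    rw [show ((((eqToHom hT.hT0).app (op A)).app A x₁ : (A ⟶ A))) = 𝟙 A from h0] at this
    rw [show tr hT.hT1 (op Z) A ((T.connE 0 δ).app A x₁)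
        = ((eqToHom hT.hT1).app (op Z)).app A ((T.connE 0 δ).app A x₁) from rfl, this]
    exact push_id δ
  have h2 : ((T.T 1).map p.op).app A ((T.connE 0 δ).app A x₁) = 0 :=
    (T.exact₃ 0 δ a₀ p hr A).apply_apply_eq_zero x₁
  calc pull p δ = pull p (tr hT.hT1 (op Z) A ((T.connE 0 δ).app A x₁)) := by rw [h1]
    _ = tr hT.hT1 (op B) A (((T.T 1).map p.op).app A ((T.connE 0 δ).app A x₁)) :=
        (tr_natural₁ hT.hT1 p.op A _).symm
    _ = 0 := by rw [h2]; exact (ConcreteCategory.hom (tr hT.hT1 (op B) A)).map_zero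

/-- an extension killed by a deflation is a pushforward of the corresponding extension -/
lemma exists_push_eq (hT : T.IsGood) {A B Z : C} (a₀ : A ⟶ B) (p : B ⟶ Z) (δ : Ext Z A)
    (hr : real δ a₀ p) {A' : C} (ψ : Ext Z A') (hψ : pull p ψ = 0) :
    ∃ f : A ⟶ A', push f δ = ψ := by
  set ψ' := tr hT.hT1.symm (op Z) A' ψ with hψ'
  have hz : ((T.T 1).map p.op).app A' ψ' = 0 := by
    have := (tr_natural₁ hT.hT1.symm p.op A' ψ).symm
    rw [hψ']
    rw [this, show ((Extriangulated.E (C := C)).map p.op).app A' ψ = pull p ψ from rfl, hψ]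
    exact (ConcreteCategory.hom (tr hT.hT1.symm (op B) A')).map_zero
  obtain ⟨x, hx⟩ := (T.exact₃ 0 δ a₀ p hr A' ψ').mp hz
  refine ⟨(tr hT.hT0 (op A) A' x : (A ⟶ A')), ?_⟩
  have h0 := hT.connE_zero δ A' x
  rw [show (T.connE 0 δ).app A' x = ψ' from hx] at h0
  rw [show ((eqToHom hT.hT1).app (op Z)).app A' ψ' = tr hT.hT1 (op Z) A' ψ' from rfl] at h0
  rw [hψ', tr_tr_symm] at h0
  exact h0.symm

/-- common refinement of two s-triangles over the same base -/
lemma common_refine (hT : T.IsGood) {Z A₁ B₁ A₂ B₂ : C}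
    (a₁ : A₁ ⟶ B₁) (p₁ : B₁ ⟶ Z) (δ₁ : Ext Z A₁) (h₁ : real δ₁ a₁ p₁)
    (a₂ : A₂ ⟶ B₂) (p₂ : B₂ ⟶ Z) (δ₂ : Ext Z A₂) (h₂ : real δ₂ a₂ p₂) :
    ∃ (A₃ B₃ : C) (a₃ : A₃ ⟶ B₃) (p₃ : B₃ ⟶ Z) (δ₃ : Ext Z A₃),
      real δ₃ a₃ p₃ ∧ ∃ (f₁ : A₃ ⟶ A₁) (f₂ : A₃ ⟶ A₂),
        push f₁ δ₃ = δ₁ ∧ push f₂ δ₃ = δ₂ := by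
  obtain ⟨Q, w, t, hQ⟩ := real_exists (pull p₂ δ₁)
  obtain ⟨E₀, h, dc, ec, δ₃, hreal₃, -, -, -, hpush₂, -⟩ :=
    et4op δ₂ (pull p₂ δ₁) a₂ p₂ w t h₂ hQ
  have hz : pull (t ≫ p₂) δ₁ = 0 := by
    rw [pull_comp]
    rw [pull_self_zero hT w t (pull p₂ δ₁) hQ]
  obtain ⟨f₁, hf₁⟩ := exists_push_eq hT h (t ≫ p₂) δ₃ hreal₃ δ₁ hz
  exact ⟨E₀, Q, h, t ≫ p₂, δ₃, hreal₃, f₁, dc, hf₁, hpush₂⟩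

/-- every element of `T^{n+1}(Z,U)` is a value of a degree-`n` connecting morphism -/
lemma efface_repr (B : BivDeltaFunctor C) (hB : B.IsGood) (n : ℕ) (Z U : C)
    (x : ((B.T (n + 1)).obj (op Z)).obj U) :
    ∃ (A B₀ : C) (a₀ : A ⟶ B₀) (p : B₀ ⟶ Z) (δ : Ext Z A),
      real δ a₀ p ∧ ∃ y, (B.connE n δ).app U y = x := by
  obtain ⟨B₀, p, ⟨A, a₀, δ, hr⟩, hz⟩ := hB.effaceable_contra (n + 1) (Nat.succ_pos n) U Z x
  obtain ⟨y, hy⟩ := (B.exact₃ n δ a₀ p hr U x).mp hz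
  exact ⟨A, B₀, a₀, p, δ, hr, y, hy⟩

end
end S14

namespace S14
open Extriangulated
section
variable {C : Type u} [Category.{v} C] [Preadditive C]
  [HasZeroObject C] [HasBinaryBiproducts C] [Extriangulated C]
variable (T R : BivDeltaFunctor C)

/-- compatibility with the contravariant connecting morphisms in degree `n` -/
def CompatE (n : ℕ) (θ : R.T n ⟶ T.T n) (θ' : R.T (n + 1) ⟶ T.T (n + 1)) : Prop :=
  ∀ {A Z : C} (δ : Ext Z A) (U : C) (x : ((R.T n).obj (op A)).obj U),
    (θ'.app (op Z)).app U ((R.connE n δ).app U x)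
      = (T.connE n δ).app U ((θ.app (op A)).app U x)

/-- compatibility with the covariant connecting morphisms in degree `n` -/
def CompatH (n : ℕ) (θ : R.T n ⟶ T.T n) (θ' : R.T (n + 1) ⟶ T.T (n + 1)) : Prop :=
  ∀ {A Z : C} (δ : Ext Z A) (U : C) (x : ((R.T n).obj (op U)).obj Z),
    (θ'.app (op U)).app A ((R.connH n δ).app (op U) x)
      = (T.connH n δ).app (op U) ((θ.app (op U)).app Z x)

/-- componentwise bijectivity -/
def Bij (n : ℕ) (θ : R.T n ⟶ T.T n) : Prop :=
  ∀ (Z : Cᵒᵖ) (U : C), Function.Bijective ((θ.app Z).app U)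

lemma step (hT : T.IsGood) (hR : R.IsGood) (m : ℕ)
    (θp : R.T m ⟶ T.T m) (θ : R.T (m + 1) ⟶ T.T (m + 1))
    (hbij : Bij T R (m + 1) θ) (hE : CompatE T R m θp θ) (hH : CompatH T R m θp θ) :
    ∃ θ' : R.T (m + 1 + 1) ⟶ T.T (m + 1 + 1),
      Bij T R (m + 1 + 1) θ' ∧ CompatE T R (m + 1) θ θ' ∧ CompatH T R (m + 1) θ θ' := by
  classical
  -- (H1) well-definedness for a fixed s-triangle
  have H1 : ∀ {A B Z : C} (a₀ : A ⟶ B) (p : B ⟶ Z) (δ : Ext Z A), real δ a₀ p →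
      ∀ (U : C) (y y' : ((R.T (m + 1)).obj (op A)).obj U),
      (R.connE (m + 1) δ).app U y = (R.connE (m + 1) δ).app U y' →
      (T.connE (m + 1) δ).app U ((θ.app (op A)).app U y)
        = (T.connE (m + 1) δ).app U ((θ.app (op A)).app U y') := by
    intro A B Z a₀ p δ hr U y y' hyy
    have hz : (R.connE (m + 1) δ).app U (y - y') = 0 := by
      rw [(ConcreteCategory.hom ((R.connE (m + 1) δ).app U)).map_sub, hyy, sub_self]
    obtain ⟨v, hv⟩ := (R.exact₂ (m + 1) δ a₀ p hr U (y - y')).mp hz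
    have hθ : (θ.app (op A)).app U (y - y')
        = ((T.T (m + 1)).map a₀.op).app U ((θ.app (op B)).app U v) := by
      rw [← hv]; exact nat_elem₁ θ a₀.op U v
    have hz2 : (T.connE (m + 1) δ).app U ((θ.app (op A)).app U (y - y')) = 0 := by
      rw [hθ]; exact (T.exact₂ (m + 1) δ a₀ p hr U).apply_apply_eq_zero _
    rw [(ConcreteCategory.hom ((θ.app (op A)).app U)).map_sub, (ConcreteCategory.hom ((T.connE (m + 1) δ).app U)).map_sub] at hz2
    exact sub_eq_zero.mp hz2
  -- (H2a) transport of representatives along a morphism of extensions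
  have H2a : ∀ {Z A₁ A₃ : C} (δ₁ : Ext Z A₁) (δ₃ : Ext Z A₃) (f : A₃ ⟶ A₁),
      push f δ₃ = δ₁ → ∀ (U : C) (y₁ : ((R.T (m + 1)).obj (op A₁)).obj U),
      (R.connE (m + 1) δ₃).app U (((R.T (m + 1)).map f.op).app U y₁)
        = (R.connE (m + 1) δ₁).app U y₁ := by
    intro Z A₁ A₃ δ₁ δ₃ f hf U y₁
    have hcond : push f δ₃ = pull (𝟙 Z) δ₁ := by rw [pull_id]; exact hf
    have h := R.connE_natural (m + 1) δ₃ δ₁ f (𝟙 Z) hcond U y₁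
    rw [h, op_id, CategoryTheory.Functor.map_id]
    rfl
  -- (H2) invariance under a morphism of extensions
  have H2 : ∀ {Z U A₁ B₁ A₃ B₃ : C} (a₁ : A₁ ⟶ B₁) (p₁ : B₁ ⟶ Z) (δ₁ : Ext Z A₁),
      real δ₁ a₁ p₁ → ∀ (a₃ : A₃ ⟶ B₃) (p₃ : B₃ ⟶ Z) (δ₃ : Ext Z A₃), real δ₃ a₃ p₃ →
      ∀ (f : A₃ ⟶ A₁), push f δ₃ = δ₁ →
      ∀ (y₁ : ((R.T (m + 1)).obj (op A₁)).obj U) (y₃ : ((R.T (m + 1)).obj (op A₃)).obj U),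
      (R.connE (m + 1) δ₃).app U y₃ = (R.connE (m + 1) δ₁).app U y₁ →
      (T.connE (m + 1) δ₃).app U ((θ.app (op A₃)).app U y₃)
        = (T.connE (m + 1) δ₁).app U ((θ.app (op A₁)).app U y₁) := by
    intro Z U A₁ B₁ A₃ B₃ a₁ p₁ δ₁ hr₁ a₃ p₃ δ₃ hr₃ f hf y₁ y₃ hyy
    have h₃ := H2a δ₁ δ₃ f hf U y₁
    have e1 := H1 a₃ p₃ δ₃ hr₃ U y₃ (((R.T (m + 1)).map f.op).app U y₁) (by rw [h₃, ← hyy])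
    rw [e1, nat_elem₁ θ f.op U y₁]
    have hcond : push f δ₃ = pull (𝟙 Z) δ₁ := by rw [pull_id]; exact hf
    have h := T.connE_natural (m + 1) δ₃ δ₁ f (𝟙 Z) hcond U ((θ.app (op A₁)).app U y₁)
    rw [h, op_id, CategoryTheory.Functor.map_id]
    rfl
  -- (H3) full well-definedness
  have H3 : ∀ {Z U A₁ B₁ A₂ B₂ : C} (a₁ : A₁ ⟶ B₁) (p₁ : B₁ ⟶ Z) (δ₁ : Ext Z A₁),
      real δ₁ a₁ p₁ → ∀ (a₂ : A₂ ⟶ B₂) (p₂ : B₂ ⟶ Z) (δ₂ : Ext Z A₂), real δ₂ a₂ p₂ →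
      ∀ (y₁ : ((R.T (m + 1)).obj (op A₁)).obj U) (y₂ : ((R.T (m + 1)).obj (op A₂)).obj U),
      (R.connE (m + 1) δ₁).app U y₁ = (R.connE (m + 1) δ₂).app U y₂ →
      (T.connE (m + 1) δ₁).app U ((θ.app (op A₁)).app U y₁)
        = (T.connE (m + 1) δ₂).app U ((θ.app (op A₂)).app U y₂) := by
    intro Z U A₁ B₁ A₂ B₂ a₁ p₁ δ₁ hr₁ a₂ p₂ δ₂ hr₂ y₁ y₂ hy
    obtain ⟨A₃, B₃, a₃, p₃, δ₃, hr₃, f₁, f₂, hf₁, hf₂⟩ :=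
      common_refine hT a₁ p₁ δ₁ hr₁ a₂ p₂ δ₂ hr₂
    have k₁ := H2 a₁ p₁ δ₁ hr₁ a₃ p₃ δ₃ hr₃ f₁ hf₁ y₁
      (((R.T (m + 1)).map f₁.op).app U y₁) (H2a δ₁ δ₃ f₁ hf₁ U y₁)
    have k₂ := H2 a₂ p₂ δ₂ hr₂ a₃ p₃ δ₃ hr₃ f₂ hf₂ y₂
      (((R.T (m + 1)).map f₂.op).app U y₂) (H2a δ₂ δ₃ f₂ hf₂ U y₂)
    have k₃ := H1 a₃ p₃ δ₃ hr₃ U (((R.T (m + 1)).map f₁.op).app U y₁)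
      (((R.T (m + 1)).map f₂.op).app U y₂)
      (by rw [H2a δ₁ δ₃ f₁ hf₁ U y₁, H2a δ₂ δ₃ f₂ hf₂ U y₂, hy])
    rw [← k₁, k₃, k₂]
  -- choose effacement data
  choose Af Bf af pf df hrf yf hyf using efface_repr R hR (m + 1)
  set V : ∀ (Z U : C), ((R.T (m + 1 + 1)).obj (op Z)).obj U → ((T.T (m + 1 + 1)).obj (op Z)).obj U :=
    fun Z U x => (T.connE (m + 1) (df Z U x)).app U ((θ.app (op (Af Z U x))).app U (yf Z U x))
    with hVdef
  have Hkey : ∀ (Z U : C) (x : ((R.T (m + 1 + 1)).obj (op Z)).obj U) {A B : C}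
      (a₀ : A ⟶ B) (p : B ⟶ Z) (δ : Ext Z A), real δ a₀ p →
      ∀ (y : ((R.T (m + 1)).obj (op A)).obj U), (R.connE (m + 1) δ).app U y = x →
      V Z U x = (T.connE (m + 1) δ).app U ((θ.app (op A)).app U y) := by
    intro Z U x A B a₀ p δ hr y hy
    exact H3 (af Z U x) (pf Z U x) (df Z U x) (hrf Z U x) a₀ p δ hr (yf Z U x) y
      (by rw [hyf, hy])
  have Hadd : ∀ (Z U : C) (x x' : ((R.T (m + 1 + 1)).obj (op Z)).obj U),
      V Z U (x + x') = V Z U x + V Z U x' := by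
    intro Z U x x'
    obtain ⟨A₃, B₃, a₃, p₃, δ₃, hr₃, f₁, f₂, hf₁, hf₂⟩ :=
      common_refine hT (af Z U x) (pf Z U x) (df Z U x) (hrf Z U x)
        (af Z U x') (pf Z U x') (df Z U x') (hrf Z U x')
    set y₃ := ((R.T (m + 1)).map f₁.op).app U (yf Z U x) with hy₃
    set y₃' := ((R.T (m + 1)).map f₂.op).app U (yf Z U x') with hy₃'
    have g₃ : (R.connE (m + 1) δ₃).app U y₃ = x := by
      rw [hy₃, H2a _ δ₃ f₁ hf₁ U _, hyf]
    have g₃' : (R.connE (m + 1) δ₃).app U y₃' = x' := by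
      rw [hy₃', H2a _ δ₃ f₂ hf₂ U _, hyf]
    have gsum : (R.connE (m + 1) δ₃).app U (y₃ + y₃') = x + x' := by
      rw [(ConcreteCategory.hom ((R.connE (m + 1) δ₃).app U)).map_add, g₃, g₃']
    rw [Hkey Z U (x + x') a₃ p₃ δ₃ hr₃ (y₃ + y₃') gsum,
        Hkey Z U x a₃ p₃ δ₃ hr₃ y₃ g₃, Hkey Z U x' a₃ p₃ δ₃ hr₃ y₃' g₃',
        (ConcreteCategory.hom ((θ.app (op A₃)).app U)).map_add, (ConcreteCategory.hom ((T.connE (m + 1) δ₃).app U)).map_add]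
  have Hnat₂ : ∀ (Z : C) {U U' : C} (u : U ⟶ U') (x : ((R.T (m + 1 + 1)).obj (op Z)).obj U),
      V Z U' (((R.T (m + 1 + 1)).obj (op Z)).map u x)
        = ((T.T (m + 1 + 1)).obj (op Z)).map u (V Z U x) := by
    intro Z U U' u x
    have hy : (R.connE (m + 1) (df Z U x)).app U'
        (((R.T (m + 1)).obj (op (Af Z U x))).map u (yf Z U x))
        = ((R.T (m + 1 + 1)).obj (op Z)).map u x := by
      have hnat : (R.connE (m + 1) (df Z U x)).app U'
          (((R.T (m + 1)).obj (op (Af Z U x))).map u (yf Z U x))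
          = ((R.T (m + 1 + 1)).obj (op Z)).map u
            ((R.connE (m + 1) (df Z U x)).app U (yf Z U x)) :=
        ConcreteCategory.congr_hom ((R.connE (m + 1) (df Z U x)).naturality u) (yf Z U x)
      rw [hnat, hyf]
    rw [Hkey Z U' _ (af Z U x) (pf Z U x) (df Z U x) (hrf Z U x) _ hy,
        nat_elem₂ θ (op (Af Z U x)) u (yf Z U x)]
    exact ConcreteCategory.congr_hom ((T.connE (m + 1) (df Z U x)).naturality u)
      ((θ.app (op (Af Z U x))).app U (yf Z U x))
  have Hnat₁ : ∀ {Z Z' : C} (c : Z' ⟶ Z) (U : C) (x : ((R.T (m + 1 + 1)).obj (op Z)).obj U),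
      V Z' U (((R.T (m + 1 + 1)).map c.op).app U x)
        = ((T.T (m + 1 + 1)).map c.op).app U (V Z U x) := by
    intro Z Z' c U x
    obtain ⟨Bc, ac, pc, hrc⟩ := real_exists (pull c (df Z U x))
    have hcond : push (𝟙 (Af Z U x)) (pull c (df Z U x)) = pull c (df Z U x) := push_id _
    have h2 : ((R.T (m + 1)).map (𝟙 (Af Z U x)).op).app U (yf Z U x) = yf Z U x := by
      rw [op_id, CategoryTheory.Functor.map_id]; rfl
    have h1 := R.connE_natural (m + 1) (pull c (df Z U x)) (df Z U x) (𝟙 _) c hcond U (yf Z U x)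
    rw [h2] at h1
    have h1' : (R.connE (m + 1) (pull c (df Z U x))).app U (yf Z U x)
        = ((R.T (m + 1 + 1)).map c.op).app U x := by
      rw [h1, hyf]
    rw [Hkey Z' U _ ac pc _ hrc (yf Z U x) h1']
    have h3 := T.connE_natural (m + 1) (pull c (df Z U x)) (df Z U x) (𝟙 _) c hcond U
      ((θ.app (op (Af Z U x))).app U (yf Z U x))
    have h4 : ((T.T (m + 1)).map (𝟙 (Af Z U x)).op).app U
        ((θ.app (op (Af Z U x))).app U (yf Z U x))
        = (θ.app (op (Af Z U x))).app U (yf Z U x) := by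
      rw [op_id, CategoryTheory.Functor.map_id]; rfl
    rw [h4] at h3
    exact h3
  have Hinj : ∀ (Z U : C) (x : ((R.T (m + 1 + 1)).obj (op Z)).obj U), V Z U x = 0 → x = 0 := by
    intro Z U x hx
    obtain ⟨v, hv⟩ := (T.exact₂ (m + 1) (df Z U x) (af Z U x) (pf Z U x) (hrf Z U x) U
      ((θ.app (op (Af Z U x))).app U (yf Z U x))).mp hx
    obtain ⟨u, hu⟩ := (hbij (op (Bf Z U x)) U).2 v
    have heq : (θ.app (op (Af Z U x))).app U (yf Z U x)
        = (θ.app (op (Af Z U x))).app U (((R.T (m + 1)).map (af Z U x).op).app U u) := by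
      rw [nat_elem₁ θ (af Z U x).op U u, hu, hv]
    have hy2 := (hbij (op (Af Z U x)) U).1 heq
    rw [← hyf Z U x, hy2]
    exact (R.exact₂ (m + 1) (df Z U x) (af Z U x) (pf Z U x) (hrf Z U x) U).apply_apply_eq_zero u
  have Hsurj : ∀ (Z U : C) (t : ((T.T (m + 1 + 1)).obj (op Z)).obj U), ∃ x, V Z U x = t := by
    intro Z U t
    obtain ⟨B₀, p, ⟨A, a₀, δ, hr⟩, hz⟩ :=
      hT.effaceable_contra (m + 1 + 1) (Nat.succ_pos _) U Z t
    obtain ⟨s, hs⟩ := (T.exact₃ (m + 1) δ a₀ p hr U t).mp hz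
    obtain ⟨y, hy⟩ := (hbij (op A) U).2 s
    refine ⟨(R.connE (m + 1) δ).app U y, ?_⟩
    rw [Hkey Z U _ a₀ p δ hr y rfl, hy, hs]
  -- assemble the natural transformation
  have hnatU : ∀ (Z : Cᵒᵖ) {U U' : C} (u : U ⟶ U'),
      ((R.T (m + 1 + 1)).obj Z).map u ≫ AddCommGrpCat.ofHom (AddMonoidHom.mk' (V Z.unop U') (Hadd Z.unop U'))
        = AddCommGrpCat.ofHom (AddMonoidHom.mk' (V Z.unop U) (Hadd Z.unop U)) ≫ ((T.T (m + 1 + 1)).obj Z).map u := by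
    intro Z U U' u
    ext x
    exact Hnat₂ Z.unop u x
  let Θapp : ∀ (Z : Cᵒᵖ), ((R.T (m + 1 + 1)).obj Z ⟶ (T.T (m + 1 + 1)).obj Z) := fun Z =>
    { app := fun U => AddCommGrpCat.ofHom (AddMonoidHom.mk' (V Z.unop U) (Hadd Z.unop U)),
      naturality := fun {U U'} u => hnatU Z u }
  have hnatZ : ∀ {Z Z' : Cᵒᵖ} (f : Z ⟶ Z'),
      (R.T (m + 1 + 1)).map f ≫ Θapp Z' = Θapp Z ≫ (T.T (m + 1 + 1)).map f := by
    intro Z Z' f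
    apply NatTrans.ext
    funext U
    ext x
    exact Hnat₁ f.unop U x
  refine ⟨{ app := Θapp, naturality := fun {Z Z'} f => hnatZ f }, ?_, ?_, ?_⟩
  · intro Z U
    refine ⟨fun a b hab => ?_, fun t => Hsurj Z.unop U t⟩
    have hVsub : ∀ a b, V Z.unop U (a - b) = V Z.unop U a - V Z.unop U b := fun a b =>
      (AddMonoidHom.mk' (V Z.unop U) (Hadd Z.unop U)).map_sub a b
    have hab' : V Z.unop U a = V Z.unop U b := hab
    have : V Z.unop U (a - b) = 0 := by rw [hVsub, hab', sub_self]
    have := Hinj Z.unop U (a - b) this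
    exact sub_eq_zero.mp this
  · intro A Z δ U x
    obtain ⟨B, a₀, p, hr⟩ := real_exists δ
    exact Hkey Z U ((R.connE (m + 1) δ).app U x) a₀ p δ hr x rfl
  · intro A Z δ U x
    obtain ⟨B₀, p, ⟨A₀, a₀, δ₀, hr₀⟩, hz⟩ :=
      hR.effaceable_contra (m + 1) (Nat.succ_pos m) Z U x
    obtain ⟨w, hw⟩ := (R.exact₃ m δ₀ a₀ p hr₀ Z x).mp hz
    have hsqR := hR.square m δ₀ δ w
    rw [hw] at hsqR
    show V U A ((R.connH (m + 1) δ).app (op U) x)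
      = (T.connH (m + 1) δ).app (op U) ((θ.app (op U)).app Z x)
    rw [hsqR, Hkey U A _ a₀ p δ₀ hr₀ ((R.connH m δ).app (op A₀) w) rfl,
        hH δ A₀ w, ← hT.square m δ₀ δ ((θp.app (op A₀)).app Z w), ← hE δ₀ Z w, hw]

/-- a pair of consecutive components of the comparison morphism -/
structure Pack (n : ℕ) where
  a : R.T n ⟶ T.T n
  b : R.T (n + 1) ⟶ T.T (n + 1)
  bija : Bij T R n a
  bijb : Bij T R (n + 1) b
  cE : CompatE T R n a b
  cH : CompatH T R n a b

noncomputable def pack0 (hT : T.IsGood) (hR : R.IsGood) : Pack T R 0 where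
  a := eqToHom (hR.hT0.trans hT.hT0.symm)
  b := eqToHom (hR.hT1.trans hT.hT1.symm)
  bija Z U := tr_bijective (hR.hT0.trans hT.hT0.symm) Z U
  bijb Z U := tr_bijective (hR.hT1.trans hT.hT1.symm) Z U
  cE := by
    intro A Z δ U x
    apply tr_injective hT.hT1 (op Z) U
    have e₁ : tr hT.hT1 (op Z) U (tr (hR.hT1.trans hT.hT1.symm) (op Z) U
        ((R.connE 0 δ).app U x)) = tr hR.hT1 (op Z) U ((R.connE 0 δ).app U x) :=
      tr₃ hR.hT1 hT.hT1 (op Z) U _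
    have e₂ : tr hR.hT1 (op Z) U ((R.connE 0 δ).app U x)
        = push ((tr hR.hT0 (op A) U x : (A ⟶ U))) δ := hR.connE_zero δ U x
    have e₃ : tr hT.hT1 (op Z) U ((T.connE 0 δ).app U
          (tr (hR.hT0.trans hT.hT0.symm) (op A) U x))
        = push ((tr hT.hT0 (op A) U (tr (hR.hT0.trans hT.hT0.symm) (op A) U x) : (A ⟶ U))) δ :=
      hT.connE_zero δ U (tr (hR.hT0.trans hT.hT0.symm) (op A) U x)
    have e₄ : tr hT.hT0 (op A) U (tr (hR.hT0.trans hT.hT0.symm) (op A) U x)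
        = tr hR.hT0 (op A) U x := tr₃ hR.hT0 hT.hT0 (op A) U x
    show tr hT.hT1 (op Z) U (tr (hR.hT1.trans hT.hT1.symm) (op Z) U ((R.connE 0 δ).app U x))
      = tr hT.hT1 (op Z) U ((T.connE 0 δ).app U (tr (hR.hT0.trans hT.hT0.symm) (op A) U x))
    rw [e₁, e₂, e₃, e₄]
  cH := by
    intro A Z δ U x
    apply tr_injective hT.hT1 (op U) A
    have e₁ : tr hT.hT1 (op U) A (tr (hR.hT1.trans hT.hT1.symm) (op U) A
        ((R.connH 0 δ).app (op U) x)) = tr hR.hT1 (op U) A ((R.connH 0 δ).app (op U) x) :=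
      tr₃ hR.hT1 hT.hT1 (op U) A _
    have e₂ : tr hR.hT1 (op U) A ((R.connH 0 δ).app (op U) x)
        = pull ((tr hR.hT0 (op U) Z x : (U ⟶ Z))) δ := hR.connH_zero δ U x
    have e₃ : tr hT.hT1 (op U) A ((T.connH 0 δ).app (op U)
          (tr (hR.hT0.trans hT.hT0.symm) (op U) Z x))
        = pull ((tr hT.hT0 (op U) Z (tr (hR.hT0.trans hT.hT0.symm) (op U) Z x) : (U ⟶ Z))) δ :=
      hT.connH_zero δ U (tr (hR.hT0.trans hT.hT0.symm) (op U) Z x)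
    have e₄ : tr hT.hT0 (op U) Z (tr (hR.hT0.trans hT.hT0.symm) (op U) Z x)
        = tr hR.hT0 (op U) Z x := tr₃ hR.hT0 hT.hT0 (op U) Z x
    show tr hT.hT1 (op U) A (tr (hR.hT1.trans hT.hT1.symm) (op U) A ((R.connH 0 δ).app (op U) x))
      = tr hT.hT1 (op U) A ((T.connH 0 δ).app (op U) (tr (hR.hT0.trans hT.hT0.symm) (op U) Z x))
    rw [e₁, e₂, e₃, e₄]

noncomputable def packs (hT : T.IsGood) (hR : R.IsGood) : ∀ n, Pack T R n :=
  fun n => Nat.rec (pack0 T R hT hR)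
    (fun n P =>
      { a := P.b
        b := (step T R hT hR n P.a P.b P.bijb P.cE P.cH).choose
        bija := P.bijb
        bijb := (step T R hT hR n P.a P.b P.bijb P.cE P.cH).choose_spec.1
        cE := (step T R hT hR n P.a P.b P.bijb P.cE P.cH).choose_spec.2.1
        cH := (step T R hT hR n P.a P.b P.bijb P.cE P.cH).choose_spec.2.2 }) n

end
end S14

open Extriangulated in
/-- If `(T, ε, η)` and `(R, γ, μ)` are bivariant δ-functors on a (skeletally small)
extriangulated category satisfying the assumptions (2.2)–(2.4) — `T⁰ = R⁰ = Hom`,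
weak effaceability in positive degrees, degree-zero connecting maps given by
pushout/pullback of extensions, and commutation of the two connecting maps — then
there is a unique isomorphism of δ-functors `θ : R → T` with `θ⁰` the identity of
`Hom_C(?, -)`. -/
theorem statement14 {C : Type u} [Category.{v} C] [Preadditive C]
    [HasZeroObject C] [HasBinaryBiproducts C] [Extriangulated C]
    (T R : BivDeltaFunctor C) (hT : T.IsGood) (hR : R.IsGood) :
    ∃! θ : ∀ i, R.T i ⟶ T.T i,
      (∀ i, IsIso (θ i)) ∧
      θ 0 = eqToHom (hR.hT0.trans hT.hT0.symm) ∧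
      IsBivDeltaMorphism R T θ := by
  classical
  refine ⟨fun i => (S14.packs T R hT hR i).a, ⟨?_, rfl, ?_, ?_⟩, ?_⟩
  · -- componentwise bijective implies iso
    intro i
    have h1 : ∀ (Z : Cᵒᵖ), IsIso (((S14.packs T R hT hR i).a).app Z) := by
      intro Z
      have h2 : ∀ U, IsIso ((((S14.packs T R hT hR i).a).app Z).app U) := by
        intro U
        exact (CategoryTheory.ConcreteCategory.isIso_iff_bijective _).mpr
          ((S14.packs T R hT hR i).bija Z U)
      exact NatIso.isIso_of_isIso_app _
    exact NatIso.isIso_of_isIso_app _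
  · intro i A Z δ U x
    exact (S14.packs T R hT hR i).cE δ U x
  · intro i A Z δ U x
    exact (S14.packs T R hT hR i).cH δ U x
  · rintro θ' ⟨hiso', h0', hE', hH'⟩
    funext i
    induction i with
    | zero => exact h0'
    | succ n ih =>
      have ih' : θ' n = (S14.packs T R hT hR n).a := ih
      show θ' (n + 1) = (S14.packs T R hT hR n).b
      apply NatTrans.ext
      funext Z
      obtain ⟨Z⟩ := Z
      apply NatTrans.ext
      funext U
      ext x
      obtain ⟨A, B₀, a₀, p, δ, hr, y, hy⟩ := S14.efface_repr R hR n Z U x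
      rw [← hy]
      have hL := hE' n δ U y
      have hR2 := (S14.packs T R hT hR n).cE δ U y
      rw [hL, hR2, ih']
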